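/- In the reproducing kernel Hilbert space setting, assume sup_{x∈D} K(x,x) < ∞. Then for every m ∈ ℕ, every mapping A : H → V_m, and every f ∈ H: ‖f − A f‖_{L_∞(μ)} ≤ (sup_{x∈D} K_m(x,x))^{1/2} · ‖f − P_m f‖_H + Λ_m · ‖f − A f‖_{L₂(μ)}, where ‖f − P_m f‖_H² = Σ_{k>m} |⟨f, b_k⟩_{L₂(μ)}|²/σ_k². -/

import Mathlib

open MeasureTheory ENNReal

/-- The (inverse) Christoffel function `Λ(V) = sup_{f ∈ V, f ≠ 0} ‖f‖_∞ / ‖f‖_2`. -/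
noncomputable def christoffel {D : Type*} [MeasurableSpace D] (μ : Measure D)
    (V : Submodule ℂ (D → ℂ)) : ℝ≥0∞ :=
  ⨆ f ∈ V, eLpNorm f ⊤ μ / eLpNorm f 2 μ

/-- `V_m = span{b_1, …, b_m}`. -/
noncomputable def Vspan {D : Type*} (b : ℕ → D → ℂ) (m : ℕ) : Submodule ℂ (D → ℂ) :=
  Submodule.span ℂ (b '' Set.Icc 1 m)

/-- Cauchy-Schwarz for infinite sums of nonnegative reals. -/
lemma tsum_cs (u v : ℕ → ℝ) (hu : ∀ k, 0 ≤ u k) (hv : ∀ k, 0 ≤ v k)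
    (hu2 : Summable fun k => u k ^ 2) (hv2 : Summable fun k => v k ^ 2) :
    Summable (fun k => u k * v k) ∧
      ∑' k, u k * v k ≤ Real.sqrt (∑' k, u k ^ 2) * Real.sqrt (∑' k, v k ^ 2) := by
  have hs : Summable fun k => u k * v k := by
    refine Summable.of_nonneg_of_le (fun k => mul_nonneg (hu k) (hv k)) (fun k => ?_)
      ((hu2.add hv2).div_const 2)
    nlinarith [sq_nonneg (u k - v k)]
  refine ⟨hs, hs.tsum_le_of_sum_le fun s => ?_⟩
  have h1 : (∑ k ∈ s, u k * v k) ^ 2 ≤ (∑ k ∈ s, u k ^ 2) * ∑ k ∈ s, v k ^ 2 :=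
    Finset.sum_mul_sq_le_sq_mul_sq s u v
  have h2 : ∑ k ∈ s, u k ^ 2 ≤ ∑' k, u k ^ 2 :=
    Summable.sum_le_tsum s (fun k _ => sq_nonneg _) hu2
  have h3 : ∑ k ∈ s, v k ^ 2 ≤ ∑' k, v k ^ 2 :=
    Summable.sum_le_tsum s (fun k _ => sq_nonneg _) hv2
  calc ∑ k ∈ s, u k * v k
      = Real.sqrt ((∑ k ∈ s, u k * v k) ^ 2) :=
        (Real.sqrt_sq (Finset.sum_nonneg fun k _ => mul_nonneg (hu k) (hv k))).symm
    _ ≤ Real.sqrt ((∑' k, u k ^ 2) * ∑' k, v k ^ 2) := by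
        apply Real.sqrt_le_sqrt
        refine h1.trans (mul_le_mul h2 h3 (Finset.sum_nonneg fun k _ => sq_nonneg _)
          (tsum_nonneg fun k => sq_nonneg _))
    _ = Real.sqrt (∑' k, u k ^ 2) * Real.sqrt (∑' k, v k ^ 2) :=
        Real.sqrt_mul (tsum_nonneg fun k => sq_nonneg _) _

/-- coeFn of a finite sum in Lp. -/
lemma Lp_coeFn_sum' {D : Type*} [MeasurableSpace D] {μ : Measure D} {ι : Type*}
    (s : Finset ι) (f : ι → Lp ℂ 2 μ) :
    ⇑(∑ i ∈ s, f i) =ᵐ[μ] fun x => ∑ i ∈ s, f i x := by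
  classical
  induction s using Finset.induction_on with
  | empty => simp only [Finset.sum_empty]; exact Lp.coeFn_zero (E := ℂ) (p := 2) (μ := μ)
  | insert i s hnotmem ih =>
    rw [Finset.sum_insert hnotmem]
    filter_upwards [Lp.coeFn_add (f i) (∑ j ∈ s, f j), ih] with x h1 h2
    rw [h1]
    simp only [Pi.add_apply]
    rw [h2, Finset.sum_insert hnotmem]

/-- **Lemma (lifting `L₂` bounds to `L_∞`, RKHS case).**
In the RKHS setting (orthonormal system `{b_k}_{k≥1}`, non-increasing square-summable
`σ ≥ 0`, bounded kernel `K(x,x) = ∑ σ_k²|b_k(x)|²`), for a function `f = ∑_{k≥1} a_k b_k`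
in `H` and any map `A` into `V_m`:
`‖f - A f‖_∞ ≤ (sup_x K_m(x,x))^{1/2} · ‖f - P_m f‖_H + Λ_m · ‖f - A f‖₂`,
where `‖f - P_m f‖_H² = ∑_{k>m} |a_k|²/σ_k²` and `K_m(x,x) = ∑_{k>m} σ_k²|b_k(x)|²`. -/
theorem stmt2 {D : Type*} [MeasurableSpace D] (μ : Measure D)
    (bb : ℕ → D → ℂ) (σ : ℕ → ℝ)
    (hmeas : ∀ k, Measurable (bb k))
    (hbdd : ∀ k, ∃ M : ℝ, ∀ x, ‖bb k x‖ ≤ M)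
    (hON : ∀ j k, 1 ≤ j → 1 ≤ k →
      ∫ x, (starRingEnd ℂ) (bb j x) * bb k x ∂μ = if j = k then 1 else 0)
    (hσ0 : σ 0 = 0) (hσnn : ∀ k, 0 ≤ σ k)
    (hσmono : ∀ j k, 1 ≤ j → j ≤ k → σ k ≤ σ j)
    (hσsum : Summable fun k => σ k ^ 2)
    (hKbdd : ∃ CK : ℝ, ∀ x,
      (∑' k, ENNReal.ofReal (σ k ^ 2 * ‖bb k x‖ ^ 2)) ≤ ENNReal.ofReal CK)
    (m : ℕ) (hm : 1 ≤ m)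
    (f : D → ℂ) (a : ℕ → ℂ)
    (ha0 : ∀ k, σ k = 0 → a k = 0)
    (hrep : ∀ x, HasSum (fun k => a k * bb k x) (f x))
    (hfH : Summable fun k => if σ k = 0 then 0 else ‖a k‖ ^ 2 / σ k ^ 2)
    (A : (D → ℂ) → D → ℂ) (hA : ∀ g : D → ℂ, A g ∈ Vspan bb m) :
    eLpNorm (fun x => f x - A f x) ⊤ μ ≤
      (⨆ x : D, ∑' k, if m < k then ENNReal.ofReal (σ k ^ 2 * ‖bb k x‖ ^ 2) else 0)
          ^ ((1:ℝ)/2) *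
        ENNReal.ofReal
          (Real.sqrt (∑' k, if m < k then
            (if σ k = 0 then 0 else ‖a k‖ ^ 2 / σ k ^ 2) else 0)) +
      christoffel μ (Vspan bb m) * eLpNorm (fun x => f x - A f x) 2 μ := by
  classical
  -- abbreviations
  set w : ℕ → ℝ := fun k => if σ k = 0 then 0 else ‖a k‖ ^ 2 / σ k ^ 2 with hw_def
  have hwnn : ∀ k, 0 ≤ w k := by
    intro k; simp only [hw_def]; split_ifs with h
    · exact le_rfl
    · positivity
  have hwsum : Summable w := hfH
  have ha_eq : ∀ k, ‖a k‖ ^ 2 = w k * σ k ^ 2 := by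
    intro k; by_cases h : σ k = 0
    · simp [hw_def, h, ha0 k h]
    · simp only [hw_def, if_neg h]; field_simp
  have hanorm : ∀ k, ‖a k‖ = Real.sqrt (w k) * σ k := by
    intro k
    have h := congrArg Real.sqrt (ha_eq k)
    rwa [Real.sqrt_sq (norm_nonneg _), Real.sqrt_mul (hwnn k), Real.sqrt_sq (hσnn k)] at h
  have hσ1 : ∀ k, σ k ^ 2 ≤ σ 1 ^ 2 := by
    intro k
    rcases Nat.eq_zero_or_pos k with h | h
    · subst h; rw [hσ0]; simpa using sq_nonneg (σ 1)
    · exact pow_le_pow_left₀ (hσnn k) (hσmono 1 k le_rfl h) 2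
  have hasq : Summable fun k => ‖a k‖ ^ 2 := by
    refine Summable.of_nonneg_of_le (fun k => sq_nonneg _) (fun k => ?_)
      (hwsum.mul_right (σ 1 ^ 2))
    rw [ha_eq k]; exact mul_le_mul_of_nonneg_left (hσ1 k) (hwnn k)
  -- membership of the basis functions in L²
  have hmem : ∀ k, 1 ≤ k → MemLp (bb k) 2 μ := by
    intro k hk
    have h1 := hON k k hk hk
    rw [if_pos rfl] at h1
    have hint : Integrable (fun x => (starRingEnd ℂ) (bb k x) * bb k x) μ := by
      by_contra hc
      rw [integral_undef hc] at h1
      exact one_ne_zero h1.symm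
    have h2 : Integrable (fun x => ‖bb k x‖ ^ 2) μ := by
      have h3 := hint.re
      refine h3.congr (Filter.Eventually.of_forall fun x => ?_)
      simp [RCLike.conj_mul (bb k x), ← Complex.ofReal_pow]
    exact (memLp_two_iff_integrable_sq_norm (hmeas k).aestronglyMeasurable).mpr h2
  -- summability of the kernel series
  obtain ⟨CK, hCK⟩ := hKbdd
  have hKsum : ∀ x, Summable fun k => σ k ^ 2 * ‖bb k x‖ ^ 2 := by
    intro x
    have h1 : (∑' k, ENNReal.ofReal (σ k ^ 2 * ‖bb k x‖ ^ 2)) ≠ ⊤ :=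
      ((hCK x).trans_lt ENNReal.ofReal_lt_top).ne
    have h2 := ENNReal.summable_toReal h1
    refine h2.congr fun k => ?_
    exact ENNReal.toReal_ofReal (by positivity)
  -- the tail function
  set p : D → ℂ := fun x => ∑ k ∈ Finset.Icc 1 m, a k * bb k x with hp_def
  set t : D → ℂ := fun x => f x - p x with ht_def
  have hts : ∀ x, HasSum (fun k => if m < k then a k * bb k x else 0) (t x) := by
    intro x
    have hzero : ∀ k ∉ Finset.Icc 1 m, (if m < k then 0 else a k * bb k x) = 0 := by
      intro k hk
      rw [Finset.mem_Icc, not_and_or, not_le, not_le] at hk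
      rcases hk with hk | hk
      · have hk0 : k = 0 := by omega
        subst hk0
        rw [ha0 0 hσ0]
        simp
      · rw [if_pos hk]
    have h3 : HasSum (fun k => if m < k then 0 else a k * bb k x) _ := hasSum_sum_of_ne_finset_zero hzero
    have h4 : p x = ∑ k ∈ Finset.Icc 1 m, (if m < k then 0 else a k * bb k x) := by
      refine Finset.sum_congr rfl fun k hk => ?_
      rw [Finset.mem_Icc] at hk
      rw [if_neg (by omega)]
    rw [← h4] at h3
    have h5 := (hrep x).sub h3
    have h6 : (fun k => if m < k then a k * bb k x else 0) =
        fun k => a k * bb k x - (if m < k then 0 else a k * bb k x) := by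
      funext k; split_ifs <;> ring
    rw [ht_def, h6]
    exact h5
  -- the H-norm of the tail
  set W : ℝ := ∑' k, if m < k then (if σ k = 0 then 0 else ‖a k‖ ^ 2 / σ k ^ 2) else 0 with hW_def
  have hWw : W = ∑' k, if m < k then w k else 0 := by rw [hW_def]
  have hWsum : Summable fun k => if m < k then w k else 0 := by
    refine Summable.of_nonneg_of_le (fun k => ?_) (fun k => ?_) hwsum
    · split_ifs; exacts [hwnn k, le_rfl]
    · split_ifs; exacts [le_rfl, hwnn k]
  have hWnn : 0 ≤ W := by
    rw [hWw]; exact tsum_nonneg fun k => by split_ifs; exacts [hwnn k, le_rfl]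
  -- real truncated kernel
  set KR : D → ℝ := fun x => ∑' k, if m < k then σ k ^ 2 * ‖bb k x‖ ^ 2 else 0 with hKR_def
  have hKRsum : ∀ x, Summable fun k => if m < k then σ k ^ 2 * ‖bb k x‖ ^ 2 else 0 := by
    intro x
    refine Summable.of_nonneg_of_le (fun k => ?_) (fun k => ?_) (hKsum x)
    · split_ifs with h
      · positivity
      · exact le_rfl
    · split_ifs with h
      · exact le_rfl
      · positivity
  have hKRnn : ∀ x, 0 ≤ KR x := fun x =>
    tsum_nonneg fun k => by
      split_ifs with h
      · positivity
      · exact le_rfl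
  -- pointwise Cauchy-Schwarz bound on the tail
  have hub : ∀ x, ‖t x‖ ≤ Real.sqrt (KR x) * Real.sqrt W := by
    intro x
    set u : ℕ → ℝ := fun k => if m < k then Real.sqrt (w k) else 0 with hu_def
    set v : ℕ → ℝ := fun k => if m < k then σ k * ‖bb k x‖ else 0 with hv_def
    have hunn : ∀ k, 0 ≤ u k := fun k => by
      simp only [hu_def]; split_ifs; exacts [Real.sqrt_nonneg _, le_rfl]
    have hvnn : ∀ k, 0 ≤ v k := fun k => by
      simp only [hv_def]; split_ifs
      exacts [mul_nonneg (hσnn k) (norm_nonneg _), le_rfl]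
    have hu2 : (fun k => u k ^ 2) = fun k => if m < k then w k else 0 := by
      funext k; simp only [hu_def]; split_ifs
      · exact Real.sq_sqrt (hwnn k)
      · exact zero_pow two_ne_zero
    have hv2 : (fun k => v k ^ 2) = fun k => if m < k then σ k ^ 2 * ‖bb k x‖ ^ 2 else 0 := by
      funext k; simp only [hv_def]; split_ifs
      · rw [mul_pow]
      · exact zero_pow two_ne_zero
    have hnorm_eq : ∀ k, ‖(if m < k then a k * bb k x else 0)‖ = u k * v k := by
      intro k; simp only [hu_def, hv_def]; split_ifs
      · rw [norm_mul, hanorm k]; ring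
      · simp
    obtain ⟨hsm, hle⟩ := tsum_cs u v hunn hvnn (by rw [hu2]; exact hWsum)
      (by rw [hv2]; exact hKRsum x)
    have h7 : ‖t x‖ ≤ ∑' k, u k * v k := by
      rw [← (hts x).tsum_eq]
      refine (norm_tsum_le_tsum_norm ?_).trans ?_
      · exact hsm.congr fun k => (hnorm_eq k).symm
      · exact le_of_eq (tsum_congr hnorm_eq)
    refine h7.trans (hle.trans ?_)
    rw [hu2, hv2, ← hWw]
    simp only [hKR_def]
    rw [mul_comm]
  -- measurability
  have hfmeas : Measurable f := by
    refine measurable_of_tendsto_metrizable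
      (f := fun N x => ∑ k ∈ Finset.range N, a k * bb k x)
      (fun N => Finset.measurable_sum _ fun k _ => ((hmeas k).const_mul (a k))) ?_
    rw [tendsto_pi_nhds]
    exact fun x => (hrep x).tendsto_sum_nat
  have hVmeas : ∀ u, u ∈ Vspan bb m → Measurable u := by
    intro u hu
    have hu' : u ∈ Submodule.span ℂ (bb '' Set.Icc 1 m) := hu
    clear hu
    induction hu' using Submodule.span_induction with
    | mem x hx => obtain ⟨k, _, rfl⟩ := hx; exact hmeas k
    | zero => exact measurable_const
    | add u v _ _ hu hv => exact hu.add hv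
    | smul c u _ hu => exact hu.const_smul c
  have hVmem : ∀ u, u ∈ Vspan bb m → MemLp u 2 μ := by
    intro u hu
    have hu' : u ∈ Submodule.span ℂ (bb '' Set.Icc 1 m) := hu
    clear hu
    induction hu' using Submodule.span_induction with
    | mem x hx => obtain ⟨k, hk, rfl⟩ := hx; exact hmem k hk.1
    | zero => exact MemLp.zero
    | add u v _ _ hu hv => exact hu.add hv
    | smul c u _ hu => exact hu.const_smul c
  have hpmeas : Measurable p := by
    simp only [hp_def]
    exact Finset.measurable_sum _ fun k _ => ((hmeas k).const_mul (a k))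
  have htmeas : Measurable t := hfmeas.sub hpmeas
  -- the part of the final bound concerning the tail
  have hbound1 : eLpNorm t ⊤ μ ≤
      (⨆ x : D, ∑' k, if m < k then ENNReal.ofReal (σ k ^ 2 * ‖bb k x‖ ^ 2) else 0)
        ^ ((1:ℝ)/2) * ENNReal.ofReal (Real.sqrt W) := by
    rw [eLpNorm_exponent_top, eLpNormEssSup]
    refine essSup_le_of_ae_le _ (Filter.Eventually.of_forall fun x => ?_)
    have step1 : ((‖t x‖₊ : ℝ≥0∞)) ≤ ENNReal.ofReal (Real.sqrt (KR x) * Real.sqrt W) := by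
      rw [← ENNReal.ofReal_coe_nnreal, coe_nnnorm]
      exact ENNReal.ofReal_le_ofReal (hub x)
    refine step1.trans ?_
    rw [ENNReal.ofReal_mul (Real.sqrt_nonneg _)]
    refine mul_le_mul_left ?_ _
    have hofKR : ENNReal.ofReal (KR x) =
        ∑' k, if m < k then ENNReal.ofReal (σ k ^ 2 * ‖bb k x‖ ^ 2) else 0 := by
      rw [hKR_def]
      rw [ENNReal.ofReal_tsum_of_nonneg (fun k => by
        split_ifs with h
        · positivity
        · exact le_rfl) (hKRsum x)]
      refine tsum_congr fun k => ?_
      split_ifs with h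
      · rfl
      · exact ENNReal.ofReal_zero
    calc ENNReal.ofReal (Real.sqrt (KR x))
        = ENNReal.ofReal ((KR x) ^ ((1:ℝ)/2)) := by
          rw [Real.sqrt_eq_rpow]
      _ = (ENNReal.ofReal (KR x)) ^ ((1:ℝ)/2) := by
          rw [← ENNReal.ofReal_rpow_of_nonneg (hKRnn x) (by norm_num)]
      _ = (∑' k, if m < k then ENNReal.ofReal (σ k ^ 2 * ‖bb k x‖ ^ 2) else 0) ^ ((1:ℝ)/2) := by
          rw [hofKR]
      _ ≤ (⨆ x : D, ∑' k, if m < k then ENNReal.ofReal (σ k ^ 2 * ‖bb k x‖ ^ 2) else 0)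
            ^ ((1:ℝ)/2) := by
          exact ENNReal.rpow_le_rpow (le_iSup (fun x => ∑' k,
            if m < k then ENNReal.ofReal (σ k ^ 2 * ‖bb k x‖ ^ 2) else 0) x) (by norm_num)
  -- the L² theory
  set v : ℕ → Lp ℂ 2 μ := fun n => (hmem (n+1) (Nat.succ_le_succ (Nat.zero_le n))).toLp (bb (n+1))
    with hv_def
  have hinner : ∀ j k, 1 ≤ j → 1 ≤ k → ∀ (hj : MemLp (bb j) 2 μ) (hk : MemLp (bb k) 2 μ),
      (inner ℂ (hj.toLp (bb j)) (hk.toLp (bb k)) : ℂ) = if j = k then 1 else 0 := by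
    intro j k hj1 hk1 hj hk
    rw [MeasureTheory.L2.inner_def, ← hON j k hj1 hk1]
    refine integral_congr_ae ?_
    filter_upwards [hj.coeFn_toLp, hk.coeFn_toLp] with x h1 h2
    rw [RCLike.inner_apply, h1, h2]
    ring
  have hON' : Orthonormal ℂ v := by
    rw [orthonormal_iff_ite]
    intro i j
    simp only [hv_def]
    rw [hinner (i+1) (j+1) (Nat.succ_le_succ (Nat.zero_le i)) (Nat.succ_le_succ (Nat.zero_le j))]
    simp [Nat.succ_inj]
  set c : ℕ → ℂ := fun n => if m ≤ n then a (n+1) else 0 with hc_def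
  have hc2 : Summable fun n => ‖c n‖ ^ 2 := by
    have h1 : Summable fun n => ‖a (n+1)‖ ^ 2 := by
      have := hasq.comp_injective Nat.succ_injective
      exact this.congr fun n => rfl
    refine Summable.of_nonneg_of_le (fun n => sq_nonneg _) (fun n => ?_) h1
    simp only [hc_def]
    split_ifs with h
    · exact le_rfl
    · simpa using sq_nonneg ‖a (n+1)‖
  have hsumE : Summable fun n => c n • v n := by
    have h := (hON'.orthogonalFamily.summable_iff_norm_sq_summable c).mpr hc2
    refine h.congr fun n => ?_
    rw [LinearIsometry.toSpanSingleton_apply]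
  obtain ⟨T, hT⟩ := hsumE
  have hTlim : Filter.Tendsto (fun N => ∑ n ∈ Finset.range N, c n • v n)
      Filter.atTop (nhds T) := hT.tendsto_sum_nat
  -- identification of T with t almost everywhere
  have hcoeT : (⇑T : D → ℂ) =ᵐ[μ] t := by
    set S : ℕ → D → ℂ := fun N x => ∑ n ∈ Finset.range N, c n * bb (n+1) x with hS_def
    have hae : ∀ᵐ x ∂μ, ∀ N, (⇑(∑ n ∈ Finset.range N, c n • v n)) x = S N x := by
      rw [MeasureTheory.ae_all_iff]
      intro N
      have h1 := Lp_coeFn_sum' (Finset.range N) (fun n => c n • v n)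
      have h2 : ∀ᵐ x ∂μ, ∀ n, (⇑(c n • v n)) x = c n * bb (n+1) x := by
        rw [MeasureTheory.ae_all_iff]
        intro n
        filter_upwards [Lp.coeFn_smul (c n) (v n),
          (hmem (n+1) (Nat.succ_le_succ (Nat.zero_le n))).coeFn_toLp] with x e1 e2
        rw [e1]
        simp only [Pi.smul_apply, smul_eq_mul]
        rw [hv_def]
        rw [e2]
      filter_upwards [h1, h2] with x e1 e2
      rw [e1, hS_def]
      exact Finset.sum_congr rfl fun n _ => e2 n
    have hnorm0 : Filter.Tendsto
        (fun N => eLpNorm (⇑(∑ n ∈ Finset.range N, c n • v n) - ⇑T) 2 μ)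
        Filter.atTop (nhds 0) := by
      have heq : ∀ N, eLpNorm (⇑(∑ n ∈ Finset.range N, c n • v n) - ⇑T) 2 μ =
          ENNReal.ofReal ‖(∑ n ∈ Finset.range N, c n • v n) - T‖ := by
        intro N
        rw [← eLpNorm_congr_ae (Lp.coeFn_sub _ T), Lp.norm_def,
          ENNReal.ofReal_toReal (Lp.eLpNorm_ne_top _)]
      simp only [heq]
      have h3 : Filter.Tendsto (fun N => ‖(∑ n ∈ Finset.range N, c n • v n) - T‖)
          Filter.atTop (nhds 0) := by
        rw [← tendsto_iff_norm_sub_tendsto_zero]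
        exact hTlim
      have h4 := (ENNReal.continuous_ofReal.tendsto 0).comp h3
      rw [ENNReal.ofReal_zero] at h4
      exact h4
    have htim := tendstoInMeasure_of_tendsto_eLpNorm (p := 2) (by norm_num)
      (fun N => Lp.aestronglyMeasurable _) (Lp.aestronglyMeasurable T) hnorm0
    obtain ⟨φ, hφmono, hφae⟩ := htim.exists_seq_tendsto_ae
    have hSx : ∀ x, Filter.Tendsto (fun N => S N x) Filter.atTop (nhds (t x)) := by
      intro x
      have h5 := (hts x).tendsto_sum_nat
      have h6 : ∀ N, S N x = ∑ k ∈ Finset.range (N+1), (if m < k then a k * bb k x else 0) := by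
        intro N
        rw [Finset.sum_range_succ']
        have h7 : (if m < 0 then a 0 * bb 0 x else 0) = 0 := by rw [if_neg (by omega)]
        rw [h7, add_zero, hS_def]
        refine Finset.sum_congr rfl fun n _ => ?_
        simp only [hc_def]
        by_cases hmn : m ≤ n
        · rw [if_pos hmn, if_pos (by omega)]
        · rw [if_neg hmn, if_neg (by omega), zero_mul]
      simp only [h6]
      exact h5.comp (Filter.tendsto_add_atTop_nat 1)
    symm
    filter_upwards [hφae, hae] with x hx1 hx2
    have h8 : Filter.Tendsto (fun j => S (φ j) x) Filter.atTop (nhds (t x)) :=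
      (hSx x).comp hφmono.tendsto_atTop
    have h9 : Filter.Tendsto (fun j => S (φ j) x) Filter.atTop (nhds (⇑T x)) := by
      refine Filter.Tendsto.congr (fun j => ?_) hx1
      exact hx2 (φ j)
    exact tendsto_nhds_unique h8 h9
  -- the projection part lies in V_m
  have hpV : p ∈ Vspan bb m := by
    have h1 : p = ∑ k ∈ Finset.Icc 1 m, a k • bb k := by
      funext x
      rw [hp_def, Finset.sum_apply]
      exact Finset.sum_congr rfl fun k _ => rfl
    rw [h1]
    refine Submodule.sum_mem _ fun k hk => Submodule.smul_mem _ _ (Submodule.subset_span ?_)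
    exact ⟨k, by simpa using hk, rfl⟩
  set hfun : D → ℂ := fun x => p x - A f x with hh_def
  have hhV : hfun ∈ Vspan bb m := by
    have : hfun = p - A f := rfl
    rw [this]
    exact Submodule.sub_mem _ hpV (hA f)
  have hhmem : MemLp hfun 2 μ := hVmem hfun hhV
  set U : Lp ℂ 2 μ := hhmem.toLp hfun with hU_def
  -- inner products of basis elements with T vanish
  have hTortho : ∀ k, 1 ≤ k → k ≤ m → ∀ hk : MemLp (bb k) 2 μ,
      (inner ℂ (hk.toLp (bb k)) T : ℂ) = 0 := by
    intro k hk1 hkm hk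
    have hcont : Filter.Tendsto
        (fun N => (inner ℂ (hk.toLp (bb k)) (∑ n ∈ Finset.range N, c n • v n) : ℂ))
        Filter.atTop (nhds (inner ℂ (hk.toLp (bb k)) T : ℂ)) :=
      Filter.Tendsto.inner (tendsto_const_nhds : Filter.Tendsto
        (fun _ : ℕ => hk.toLp (bb k)) Filter.atTop (nhds (hk.toLp (bb k)))) hTlim
    have hzero : ∀ N, (inner ℂ (hk.toLp (bb k)) (∑ n ∈ Finset.range N, c n • v n) : ℂ) = 0 := by
      intro N
      rw [inner_sum]
      refine Finset.sum_eq_zero fun n _ => ?_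
      rw [inner_smul_right]
      by_cases hmn : m ≤ n
      · have h2 : (inner ℂ (hk.toLp (bb k)) (v n) : ℂ) = 0 := by
          rw [hv_def]
          rw [hinner k (n+1) hk1 (Nat.succ_le_succ (Nat.zero_le n)) hk _]
          rw [if_neg (by omega)]
        rw [h2, mul_zero]
      · have h3 : c n = 0 := by rw [hc_def]; exact if_neg hmn
        rw [h3, zero_mul]
    simp only [hzero] at hcont
    exact tendsto_nhds_unique hcont tendsto_const_nhds
  -- inner product of U with T vanishes
  have hUT : (inner ℂ U T : ℂ) = 0 := by
    have claim : ∀ u, u ∈ Vspan bb m →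
        ∀ hu2 : MemLp u 2 μ, (inner ℂ (hu2.toLp u) T : ℂ) = 0 := by
      intro u hu
      have hu' : u ∈ Submodule.span ℂ (bb '' Set.Icc 1 m) := hu
      clear hu
      induction hu' using Submodule.span_induction with
      | mem x hx =>
        obtain ⟨k, hk, rfl⟩ := hx
        intro hu2
        exact hTortho k hk.1 hk.2 _
      | zero =>
        intro hu2
        rw [MemLp.toLp_zero, inner_zero_left]
      | add x y hx hy ihx ihy =>
        intro hu2
        rw [show hu2.toLp (x + y) =
            (hVmem x hx).toLp x + (hVmem y hy).toLp y from MemLp.toLp_add _ _,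
          inner_add_left, ihx (hVmem x hx), ihy (hVmem y hy), add_zero]
      | smul r x hx ihx =>
        intro hu2
        rw [show hu2.toLp (r • x) = r • (hVmem x hx).toLp x from
            MemLp.toLp_const_smul r _, inner_smul_left, ihx (hVmem x hx), mul_zero]
    exact claim hfun hhV hhmem
  -- Pythagoras
  have hpyth : ‖U‖ ≤ ‖T + U‖ := by
    have h1 : ‖T + U‖ ^ 2 = ‖T‖ ^ 2 + ‖U‖ ^ 2 := by
      have h2 : (inner ℂ T U : ℂ) = 0 := by
        rw [← inner_conj_symm, hUT, map_zero]
      rw [@norm_add_sq ℂ _ _ _ _ T U, h2]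
      simp
    nlinarith [norm_nonneg (T + U), norm_nonneg U, norm_nonneg T, sq_nonneg ‖T‖]
  -- identification of f - A f with T + U
  have hTU : (fun x => f x - A f x) =ᵐ[μ] ⇑(T + U) := by
    filter_upwards [Lp.coeFn_add T U, MemLp.coeFn_toLp hhmem, hcoeT] with x e1 e2 e3
    rw [e1]
    simp only [Pi.add_apply]
    rw [e3, hU_def, e2, ht_def, hh_def]
    ring
  have hASM : AEStronglyMeasurable (fun x => f x - A f x) μ :=
    (hfmeas.sub (hVmeas _ (hA f))).aestronglyMeasurable
  have hL2eq : eLpNorm (fun x => f x - A f x) 2 μ = ENNReal.ofReal ‖T + U‖ := by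
    rw [eLpNorm_congr_ae hTU, Lp.norm_def, ENNReal.ofReal_toReal (Lp.eLpNorm_ne_top _)]
  have hL2h : eLpNorm hfun 2 μ = ENNReal.ofReal ‖U‖ := by
    rw [← eLpNorm_congr_ae (MemLp.coeFn_toLp hhmem), Lp.norm_def,
      ENNReal.ofReal_toReal (Lp.eLpNorm_ne_top _)]
  -- final assembly
  by_cases hzero : eLpNorm (fun x => f x - A f x) 2 μ = 0
  · have h1 : (fun x => f x - A f x) =ᵐ[μ] 0 :=
      (eLpNorm_eq_zero_iff hASM (by norm_num)).mp hzero
    rw [eLpNorm_congr_ae h1, eLpNorm_zero]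
    exact zero_le
  · have hsplit : eLpNorm (fun x => f x - A f x) ⊤ μ ≤ eLpNorm t ⊤ μ + eLpNorm hfun ⊤ μ := by
      have h1 : (fun x => f x - A f x) = fun x => t x + hfun x := by
        funext x; rw [ht_def, hh_def]; ring
      rw [h1]
      exact eLpNorm_add_le htmeas.aestronglyMeasurable
        ((hVmeas _ hhV).aestronglyMeasurable) le_top
    refine hsplit.trans (add_le_add hbound1 ?_)
    have hchr : eLpNorm hfun ⊤ μ / eLpNorm hfun 2 μ ≤ christoffel μ (Vspan bb m) := by
      rw [christoffel]
      exact le_iSup₂ (f := fun u (_ : u ∈ Vspan bb m) => eLpNorm u ⊤ μ / eLpNorm u 2 μ) hfun hhV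
    have hb2 : eLpNorm hfun 2 μ ≤ eLpNorm (fun x => f x - A f x) 2 μ := by
      rw [hL2h, hL2eq]
      exact ENNReal.ofReal_le_ofReal hpyth
    by_cases hU0 : eLpNorm hfun 2 μ = 0
    · by_cases hUtop : eLpNorm hfun ⊤ μ = 0
      · rw [hUtop]; exact zero_le
      · rw [hU0, ENNReal.div_zero hUtop] at hchr
        rw [top_le_iff.mp hchr, ENNReal.top_mul hzero]
        exact le_top
    · have hUne : eLpNorm hfun 2 μ ≠ ⊤ := by
        rw [hL2h]; exact ENNReal.ofReal_ne_top
      calc eLpNorm hfun ⊤ μ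
          = eLpNorm hfun ⊤ μ / eLpNorm hfun 2 μ * eLpNorm hfun 2 μ :=
            (ENNReal.div_mul_cancel hU0 hUne).symm
        _ ≤ christoffel μ (Vspan bb m) * eLpNorm (fun x => f x - A f x) 2 μ :=
            mul_le_mul' hchr hb2
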